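/- Let H be a complex Hilbert space and let P and Q be orthogonal projections on H such that P − Q is a compact operator. Then the subspace {x ∈ H : Px = x and Qx = 0} is finite-dimensional. -/

import Mathlib

/-- If `P` and `Q` are orthogonal projections with `P - Q` compact, then the subspace
`{x | P x = x ∧ Q x = 0}` (i.e. `ker (P - 1) ⊓ ker Q`) is finite-dimensional. -/
theorem finiteDimensional_ker_inf_of_compact_sub
    {H : Type*} [NormedAddCommGroup H] [InnerProductSpace ℂ H] [CompleteSpace H]
    (P Q : H →L[ℂ] H)
    (hP : IsSelfAdjoint P) (hP2 : IsIdempotentElem P)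
    (hQ : IsSelfAdjoint Q) (hQ2 : IsIdempotentElem Q)
    (hPQ : IsCompactOperator (P - Q)) :
    FiniteDimensional ℂ ↥(LinearMap.ker ((P - 1 : H →L[ℂ] H) : H →ₗ[ℂ] H) ⊓ LinearMap.ker (Q : H →ₗ[ℂ] H)) := by
  set K : Submodule ℂ H := LinearMap.ker ((P - 1 : H →L[ℂ] H) : H →ₗ[ℂ] H) ⊓ LinearMap.ker (Q : H →ₗ[ℂ] H) with hK
  -- every x in K is fixed by P - Q
  have hfix : ∀ x ∈ K, (P - Q) x = x := by
    intro x hx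
    obtain ⟨h1, h2⟩ := Submodule.mem_inf.mp hx
    have h1' : P x - x = 0 := by simpa using h1
    have h2' : Q x = 0 := h2
    simp [ContinuousLinearMap.sub_apply, h2', sub_eq_zero.mp h1']
  -- K is closed
  have hKclosed : IsClosed (K : Set H) := by
    have h1 : IsClosed ((LinearMap.ker ((P - 1 : H →L[ℂ] H) : H →ₗ[ℂ] H) : Submodule ℂ H) : Set H) :=
      ContinuousLinearMap.isClosed_ker (P - 1)
    have h2 : IsClosed ((LinearMap.ker (Q : H →ₗ[ℂ] H) : Submodule ℂ H) : Set H) := ContinuousLinearMap.isClosed_ker Q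
    simpa [hK, Submodule.coe_inf] using h1.inter h2
  -- the image of the unit ball under P - Q is contained in a compact set
  obtain ⟨D, hD, hDsub⟩ := IsCompactOperator.image_closedBall_subset_compact (𝕜₁ := ℂ) (f := (P - Q).toLinearMap) hPQ 1
  -- hence the unit ball of K is contained in a compact set
  set S : Set H := Metric.closedBall (0 : H) 1 ∩ (K : Set H) with hS
  have hSsubD : S ⊆ D := by
    rintro x ⟨hx1, hx2⟩
    have := hDsub ⟨x, hx1, hfix x hx2⟩
    exact this
  have hSclosed : IsClosed S := Metric.isClosed_closedBall.inter hKclosed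
  have hScompact : IsCompact S := hD.of_isClosed_subset hSclosed hSsubD
  -- pull back to the subtype
  have hball : Metric.closedBall (0 : K) 1 = (Subtype.val : K → H) ⁻¹' S := by
    ext x
    simp [hS, Metric.mem_closedBall, dist_eq_norm, Submodule.coe_norm, x.2]
  have hcompact : IsCompact (Metric.closedBall (0 : K) 1) := by
    rw [hball]
    exact hKclosed.isClosedEmbedding_subtypeVal.isCompact_preimage hScompact
  exact FiniteDimensional.of_isCompact_closedBall₀ ℂ one_pos hcompact
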